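/- arXiv:2002.01470 — 4 statements merged into one kernel-verified Lean document; each statement's English description precedes it below -/
import Mathlib

section
/- Let p be a prime number and let m and n be integers such that m − n is not divisible by p − 1. Let M and N be modules over the ring ℤ_p of p-adic integers, and let f : M → N be a ℤ_p-linear map such that for every unit u ∈ ℤ_pˣ and every x ∈ M one has f((u^m) • x) = (u^n) • f(x) (that is, f is equivariant for the weight m cyclotomic action on M and the weight n cyclotomic action on N). Then f is the zero map. -/
/-- Any element of `ℤ_[p]` whose image in `ZMod p` is nonzero is a unit. -/
lemma padicInt_isUnit_of_toZMod_ne_zero {p : ℕ} [Fact p.Prime] {a : ℤ_[p]}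
    (h : PadicInt.toZMod a ≠ 0) : IsUnit a := by
  rw [← IsLocalRing.notMem_maximalIdeal, ← PadicInt.ker_toZMod, RingHom.mem_ker]
  exact h

/-- Proposition 2.3 of the paper: Let `p` be a prime and `m`, `n` integers with
`m - n` not divisible by `p - 1`.  Any `ℤ_p`-linear map `f : M → N` which is equivariant for
the weight `m` cyclotomic action on `M` and the weight `n` cyclotomic action on `N`
(i.e. `f (u^m • x) = u^n • f x` for all units `u` of `ℤ_p`) is the zero map. -/
theorem cyclotomic_weight_equivariant_map_eq_zero (p : ℕ) [Fact p.Prime] (m n : ℤ)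
    (hmn : ¬ ((p : ℤ) - 1) ∣ (m - n))
    (M N : Type*) [AddCommGroup M] [AddCommGroup N]
    [Module ℤ_[p] M] [Module ℤ_[p] N]
    (f : M →ₗ[ℤ_[p]] N)
    (hf : ∀ (u : ℤ_[p]ˣ) (x : M),
      f (((u ^ m : ℤ_[p]ˣ) : ℤ_[p]) • x) = ((u ^ n : ℤ_[p]ˣ) : ℤ_[p]) • f x) :
    f = 0 := by
  have hp : p.Prime := Fact.out
  -- pick a generator of `(ZMod p)ˣ`
  obtain ⟨g, hg⟩ := IsCyclic.exists_generator (α := (ZMod p)ˣ)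
  have horder : orderOf g = p - 1 := by
    rw [orderOf_eq_card_of_forall_mem_zpowers hg, Nat.card_eq_fintype_card, ZMod.card_units p]
  have hgmn : g ^ (m - n) ≠ 1 := by
    intro h
    rw [← orderOf_dvd_iff_zpow_eq_one, horder] at h
    rw [Nat.cast_sub hp.one_le, Nat.cast_one] at h
    exact hmn h
  -- lift `g` to a unit of `ℤ_[p]`
  set a : ℤ_[p] := ((g : ZMod p).val : ℤ_[p]) with ha
  have hta : PadicInt.toZMod a = (g : ZMod p) := by
    rw [ha, map_natCast, ZMod.natCast_val, ZMod.cast_id]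
  have hua : IsUnit a := by
    apply padicInt_isUnit_of_toZMod_ne_zero
    rw [hta]
    exact g.ne_zero
  obtain ⟨u, hu⟩ := hua
  set φ : ℤ_[p]ˣ →* (ZMod p)ˣ := Units.map (PadicInt.toZMod : ℤ_[p] →+* ZMod p).toMonoidHom
  have hφu : φ u = g := by
    ext
    simpa [φ, hu] using hta
  -- the image of `u ^ (m - n) - 1` in `ZMod p` is `g ^ (m-n) - 1 ≠ 0`, so it is a unit
  have hkey : IsUnit (((u ^ (m - n) : ℤ_[p]ˣ) : ℤ_[p]) - 1) := by
    apply padicInt_isUnit_of_toZMod_ne_zero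
    have h1 : PadicInt.toZMod ((u ^ (m - n) : ℤ_[p]ˣ) : ℤ_[p])
        = ((g ^ (m - n) : (ZMod p)ˣ) : ZMod p) := by
      rw [← hφu, ← map_zpow φ u (m - n)]
      rfl
    rw [map_sub, h1, map_one, sub_ne_zero]
    intro h
    exact hgmn (Units.ext h)
  -- conclude
  ext x
  have h := hf u x
  rw [map_smul] at h
  have h2 : ((u ^ (m - n) : ℤ_[p]ˣ) : ℤ_[p]) • f x = f x := by
    have h3 := congrArg (fun y => ((u ^ (-n) : ℤ_[p]ˣ) : ℤ_[p]) • y) h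
    simp only [smul_smul, ← Units.val_mul, ← zpow_add] at h3
    rw [show -n + m = m - n by ring, show -n + n = 0 by ring] at h3
    simpa using h3
  have h4 : (((u ^ (m - n) : ℤ_[p]ˣ) : ℤ_[p]) - 1) • f x = 0 := by
    rw [sub_smul, one_smul, h2, sub_self]
  obtain ⟨v, hv⟩ := hkey
  have h5 := congrArg (fun y => ((v⁻¹ : ℤ_[p]ˣ) : ℤ_[p]) • y) h4
  simp only [← hv, smul_smul, ← Units.val_mul, inv_mul_cancel, smul_zero] at h5
  simpa using h5
end

section
/- Let p be a prime number, let u be a unit of ℤ_p whose residue class modulo p generates (ℤ/pℤ)ˣ, and let i and j be integers such that i − j is not divisible by p − 1. Let N be any ℤ_p-module. Then every ℤ_p[T,T⁻¹]-linear map from ℤ_p(i) to N(j) is zero, i.e. Hom_{ℤ_p[T,T⁻¹]}(ℤ_p(i), N(j)) = 0. -/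
/-- Evaluation of a Laurent polynomial over `ℤ_p` at a unit `c ∈ ℤ_pˣ`: the `ℤ_p`-algebra
homomorphism `ℤ_p[T,T⁻¹] → ℤ_p` sending `T` to `c`. -/
noncomputable def LaurentPolynomial.evalUnit (p : ℕ) [Fact p.Prime] (c : ℤ_[p]ˣ) :
    LaurentPolynomial ℤ_[p] →+* ℤ_[p] :=
  ((AddMonoidAlgebra.lift ℤ_[p] ℤ_[p] ℤ)
    ((Units.coeHom ℤ_[p]).comp (zpowersHom ℤ_[p]ˣ c))).toRingHom

/-- Given a `ℤ_p`-module `N` and a unit `c ∈ ℤ_pˣ`, this is the `ℤ_p[T,T⁻¹]`-module structure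
on `N` obtained by restriction of scalars along evaluation at `c`, i.e. `T` acts as
multiplication by `c`.  Taking `c = u ^ i` yields the module denoted `N(i)` in the paper. -/
noncomputable def twistedModule (p : ℕ) [Fact p.Prime] (N : Type*) [AddCommGroup N]
    [Module ℤ_[p] N] (c : ℤ_[p]ˣ) : Module (LaurentPolynomial ℤ_[p]) N :=
  Module.compHom N (LaurentPolynomial.evalUnit p c)

lemma evalUnit_single0 (p : ℕ) [Fact p.Prime] (c : ℤ_[p]ˣ) (n : ℤ) (r : ℤ_[p]) :
    LaurentPolynomial.evalUnit p c (AddMonoidAlgebra.single n r) = r * ((c ^ n : ℤ_[p]ˣ) : ℤ_[p]) := by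
  rw [LaurentPolynomial.evalUnit]
  erw [AddMonoidAlgebra.lift_single]
  simp [smul_eq_mul]

lemma evalUnit_C (p : ℕ) [Fact p.Prime] (c : ℤ_[p]ˣ) (r : ℤ_[p]) :
    LaurentPolynomial.evalUnit p c (LaurentPolynomial.C r) = r := by
  rw [← LaurentPolynomial.single_eq_C, evalUnit_single0]; simp

lemma evalUnit_T (p : ℕ) [Fact p.Prime] (c : ℤ_[p]ˣ) (n : ℤ) :
    LaurentPolynomial.evalUnit p c (LaurentPolynomial.T n) = ((c ^ n : ℤ_[p]ˣ) : ℤ_[p]) := by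
  rw [show (LaurentPolynomial.T n : LaurentPolynomial ℤ_[p]) = AddMonoidAlgebra.single n 1 from rfl,
    evalUnit_single0]; simp

lemma aux_unit (p : ℕ) [Fact p.Prime] (u : ℤ_[p]ˣ)
    (hu : ∀ g : (ZMod p)ˣ,
      g ∈ Subgroup.zpowers (Units.map (PadicInt.toZMod (p := p)).toMonoidHom u))
    (i j : ℤ) (hij : ¬ ((p : ℤ) - 1) ∣ (i - j)) :
    IsUnit (((u ^ i : ℤ_[p]ˣ) : ℤ_[p]) - ((u ^ j : ℤ_[p]ˣ) : ℤ_[p])) := by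
  set v : (ZMod p)ˣ := Units.map (PadicInt.toZMod (p := p)).toMonoidHom u with hv
  have hord : orderOf v = p - 1 := by
    rw [orderOf_eq_card_of_forall_mem_zpowers hu, Nat.card_eq_fintype_card, ZMod.card_units]
  by_contra h
  have hmem : (((u ^ i : ℤ_[p]ˣ) : ℤ_[p]) - ((u ^ j : ℤ_[p]ˣ) : ℤ_[p]))
      ∈ IsLocalRing.maximalIdeal ℤ_[p] := (IsLocalRing.mem_maximalIdeal _).2 h
  rw [← PadicInt.ker_toZMod, RingHom.mem_ker, map_sub, sub_eq_zero] at hmem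
  have hvij : (v ^ i : (ZMod p)ˣ) = v ^ j := by
    ext
    simpa [hv, ← map_zpow, Units.coe_map] using hmem
  have : ((orderOf v : ℤ)) ∣ (i - j) := by
    rw [orderOf_dvd_iff_zpow_eq_one, zpow_sub, hvij, mul_inv_cancel]
  rw [hord] at this
  apply hij
  have hp1 : 1 ≤ p := (Fact.out : p.Prime).one_lt.le
  rwa [Nat.cast_sub hp1, Nat.cast_one] at this

/-- Let `p` be a prime, `u` a unit of `ℤ_p` whose residue modulo `p` generates
`(ℤ/pℤ)ˣ`, and `i, j` integers with `i - j` not divisible by `p - 1`.  For any `ℤ_p`-module `N`,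
every `ℤ_p[T,T⁻¹]`-linear map `ℤ_p(i) → N(j)` is zero. -/
theorem hom_twisted_eq_zero (p : ℕ) [Fact p.Prime] (u : ℤ_[p]ˣ)
    (hu : ∀ g : (ZMod p)ˣ,
      g ∈ Subgroup.zpowers (Units.map (PadicInt.toZMod (p := p)).toMonoidHom u))
    (i j : ℤ) (hij : ¬ ((p : ℤ) - 1) ∣ (i - j))
    (N : Type*) [AddCommGroup N] [Module ℤ_[p] N] :
    letI : Module (LaurentPolynomial ℤ_[p]) ℤ_[p] := twistedModule p ℤ_[p] (u ^ i)
    letI : Module (LaurentPolynomial ℤ_[p]) N := twistedModule p N (u ^ j)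
    ∀ f : ℤ_[p] →ₗ[LaurentPolynomial ℤ_[p]] N, f = 0 := by
  letI : Module (LaurentPolynomial ℤ_[p]) ℤ_[p] := twistedModule p ℤ_[p] (u ^ i)
  letI : Module (LaurentPolynomial ℤ_[p]) N := twistedModule p N (u ^ j)
  intro f
  have hsmulS : ∀ (s : LaurentPolynomial ℤ_[p]) (y : ℤ_[p]),
      s • y = LaurentPolynomial.evalUnit p (u ^ i) s * y := fun _ _ => rfl
  have hsmulN : ∀ (s : LaurentPolynomial ℤ_[p]) (y : N),
      s • y = LaurentPolynomial.evalUnit p (u ^ j) s • y := fun _ _ => rfl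
  have hCx : ∀ x : ℤ_[p], f x = x • f 1 := by
    intro x
    have h1 : (LaurentPolynomial.C x) • (1 : ℤ_[p]) = x := by
      rw [hsmulS, evalUnit_C, mul_one]
    calc f x = f ((LaurentPolynomial.C x) • (1 : ℤ_[p])) := by rw [h1]
    _ = (LaurentPolynomial.C x) • f 1 := f.map_smul _ _
    _ = x • f 1 := by rw [hsmulN, evalUnit_C]
  have key : (((u ^ i : ℤ_[p]ˣ) : ℤ_[p]) - ((u ^ j : ℤ_[p]ˣ) : ℤ_[p])) • f 1 = 0 := by
    have hT : (LaurentPolynomial.T 1 : LaurentPolynomial ℤ_[p]) • (1 : ℤ_[p])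
        = ((u ^ i : ℤ_[p]ˣ) : ℤ_[p]) := by
      rw [hsmulS, evalUnit_T, mul_one]; simp
    have h2 : f (((u ^ i : ℤ_[p]ˣ) : ℤ_[p])) = ((u ^ j : ℤ_[p]ˣ) : ℤ_[p]) • f 1 := by
      rw [← hT, f.map_smul, hsmulN, evalUnit_T]; simp
    rw [sub_smul, ← hCx _, h2, sub_self]
  obtain ⟨w, hw⟩ := aux_unit p u hu i j hij
  have hf1 : f 1 = 0 := by
    rw [← hw] at key
    simpa using key
  ext x
  simp [hCx x, hf1]
end

section
/- Let p be a prime number and let u be a unit of ℤ_p whose residue class modulo p generates (ℤ/pℤ)ˣ. Let m ≤ n be integers with 0 ≤ n − m < p − 1. Let M be a finitely generated ℤ_p-module equipped with a ℤ_p-linear endomorphism T, and let 0 = G_{m−1} ⊆ G_m ⊆ ⋯ ⊆ G_n = M be a chain of T-invariant ℤ_p-submodules such that for each k with m ≤ k ≤ n, the endomorphism induced by T on the quotient G_k / G_{k−1} is multiplication by the scalar u^k. Then there is a (non-canonical) isomorphism of ℤ_p-modules M ≅ ⊕_{k=m}^{n} G_k / G_{k−1}. -/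
open DirectSum Polynomial

section Helpers

variable {R : Type*} [Ring R] {M : Type*} [AddCommGroup M] [Module R M]

/-- Quotient of the top submodule by a comap is the ambient quotient. -/
noncomputable def quotTopEquivAux (A C : Submodule R M) (hA : A = ⊤) :
    (A ⧸ Submodule.comap A.subtype C) ≃ₗ[R] M ⧸ C :=
  Submodule.Quotient.equiv _ _ (LinearEquiv.ofTop A hA) (by
    ext x
    simp only [Submodule.mem_map, Submodule.mem_comap]
    constructor
    · rintro ⟨y, hy, rfl⟩
      simpa using hy
    · intro hx
      exact ⟨⟨x, hA ▸ Submodule.mem_top⟩, hx, rfl⟩)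

/-- Quotients computed inside a bigger submodule agree with the ambient ones. -/
noncomputable def quotRestrictEquivAux (A B C : Submodule R M) (hBA : B ≤ A) :
    ((Submodule.comap A.subtype B) ⧸
        Submodule.comap (Submodule.comap A.subtype B).subtype
          (Submodule.comap A.subtype C))
      ≃ₗ[R] (B ⧸ Submodule.comap B.subtype C) :=
  Submodule.Quotient.equiv _ _ (Submodule.comapSubtypeEquivOfLe hBA) (by
    ext x
    simp only [Submodule.mem_map, Submodule.mem_comap]
    constructor
    · rintro ⟨y, hy, rfl⟩
      simpa using hy
    · intro hx
      exact ⟨⟨⟨(x : M), hBA x.2⟩, x.2⟩, hx, rfl⟩)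

/-- Direct sum over a unique index type. -/
noncomputable def directSumUniqueAux {ι : Type*} [Unique ι] [DecidableEq ι] (β : ι → Type*)
    [∀ i, AddCommGroup (β i)] [∀ i, Module R (β i)] :
    (⨁ i, β i) ≃ₗ[R] β default :=
  LinearEquiv.ofLinear (DirectSum.component R ι β default) (DirectSum.lof R ι β default)
    (by ext x; simp)
    (by
      ext j x
      obtain rfl : j = default := Unique.eq_default j
      rename_i i
      obtain rfl : i = default := Unique.eq_default i
      simp)

lemma aeval_mem_invariant {S N : Type*} [CommRing S] [AddCommGroup N] [Module S N]
    (T : N →ₗ[S] N) (W : Submodule S N) (hS : ∀ x ∈ W, T x ∈ W) (q : S[X]) :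
    ∀ x ∈ W, aeval T q x ∈ W := by
  have hpow : ∀ (i : ℕ), ∀ x ∈ W, (T ^ i) x ∈ W := by
    intro i
    induction i with
    | zero => intro x hx; simpa using hx
    | succ i ih =>
      intro x hx
      rw [pow_succ, Module.End.mul_apply]
      exact ih _ (hS x hx)
  induction q using Polynomial.induction_on' with
  | add f g hf hg =>
    intro x hx
    rw [map_add, LinearMap.add_apply]
    exact Submodule.add_mem _ (hf x hx) (hg x hx)
  | monomial i a =>
    intro x hx
    rw [Polynomial.aeval_monomial, Module.End.mul_apply, Module.algebraMap_end_apply]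
    exact Submodule.smul_mem _ _ (hpow i x hx)

end Helpers

lemma isUnit_pow_sub_aux (p : ℕ) [Fact p.Prime] (u : ℤ_[p]ˣ)
    (hu : ∀ g : (ZMod p)ˣ,
      g ∈ Subgroup.zpowers (Units.map (PadicInt.toZMod (p := p)).toMonoidHom u))
    (a b : ℤ) (h1 : b < a) (h2 : a - b < (p : ℤ) - 1) :
    IsUnit (((u ^ a : ℤ_[p]ˣ) : ℤ_[p]) - ((u ^ b : ℤ_[p]ˣ) : ℤ_[p])) := by
  set v := Units.map (PadicInt.toZMod (p := p)).toMonoidHom u with hv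
  have hord : orderOf v = p - 1 := by
    rw [orderOf_eq_card_of_forall_mem_zpowers hu, Nat.card_eq_fintype_card, ZMod.card_units]
  have hp2 : 2 ≤ p := (Fact.out : p.Prime).two_le
  have hfac : ((u ^ a : ℤ_[p]ˣ) : ℤ_[p]) - ((u ^ b : ℤ_[p]ˣ) : ℤ_[p])
      = ((u ^ b : ℤ_[p]ˣ) : ℤ_[p]) * (((u ^ (a - b) : ℤ_[p]ˣ) : ℤ_[p]) - 1) := by
    rw [mul_sub, mul_one, ← Units.val_mul, ← zpow_add u]
    ring_nf
  rw [hfac]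
  refine (u ^ b).isUnit.mul ?_
  have key : PadicInt.toZMod (((u ^ (a - b) : ℤ_[p]ˣ) : ℤ_[p]) - 1) ≠ 0 := by
    have hmap : PadicInt.toZMod ((u ^ (a - b) : ℤ_[p]ˣ) : ℤ_[p])
        = ((v ^ (a - b) : (ZMod p)ˣ) : ZMod p) := by
      rw [hv, ← MonoidHom.map_zpow]
      rfl
    rw [map_sub, map_one, hmap, sub_ne_zero]
    intro hone
    have hvpow : v ^ (a - b) = 1 := Units.ext (by simpa using hone)
    have hnat : v ^ (a - b).toNat = 1 := by
      rw [← zpow_natCast, Int.toNat_of_nonneg (by omega)]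
      exact hvpow
    have hdvd := orderOf_dvd_of_pow_eq_one hnat
    rw [hord] at hdvd
    have hpos : 0 < (a - b).toNat := by omega
    have := Nat.le_of_dvd hpos hdvd
    omega
  by_contra hx
  apply key
  rw [← RingHom.mem_ker, PadicInt.ker_toZMod]
  exact IsLocalRing.mem_maximalIdeal _ |>.mpr hx

set_option maxHeartbeats 1000000 in
theorem filtered_module_splits_aux (p : ℕ) [Fact p.Prime] (u : ℤ_[p]ˣ)
    (hu : ∀ g : (ZMod p)ˣ,
      g ∈ Subgroup.zpowers (Units.map (PadicInt.toZMod (p := p)).toMonoidHom u)) :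
    ∀ (d : ℕ) (m n : ℤ), n = m + d → n - m < (p : ℤ) - 1 →
    ∀ (M : Type) [AddCommGroup M] [Module ℤ_[p] M] (T : M →ₗ[ℤ_[p]] M)
      (G : ℤ → Submodule ℤ_[p] M),
      G (m - 1) = ⊥ → G n = ⊤ →
      (∀ k : ℤ, m ≤ k → k ≤ n → G (k - 1) ≤ G k) →
      (∀ k : ℤ, m ≤ k → k ≤ n → ∀ x ∈ G k, T x ∈ G k) →
      (∀ k : ℤ, m ≤ k → k ≤ n → ∀ x ∈ G k,
        T x - ((u ^ k : ℤ_[p]ˣ) : ℤ_[p]) • x ∈ G (k - 1)) →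
      Nonempty (M ≃ₗ[ℤ_[p]] ⨁ k : (Finset.Icc m n),
        (G (k : ℤ) ⧸ Submodule.comap (G (k : ℤ)).subtype (G ((k : ℤ) - 1)))) := by
  intro d
  induction d with
  | zero =>
    intro m n hn hp M _ _ T G hbot htop hchain hinv hwt
    have hnm : n = m := by omega
    subst hnm
    letI : Unique ↥(Finset.Icc n n) :=
      ⟨⟨⟨n, by simp⟩⟩, fun x => Subtype.ext (by
        show (x : ℤ) = n
        have := Finset.mem_Icc.mp x.2; omega)⟩
    have hC : Submodule.comap (G n).subtype (G (n - 1)) = ⊥ := by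
      rw [hbot, Submodule.comap_bot, Submodule.ker_subtype]
    have Ezero : (⨁ k : ↥(Finset.Icc n n),
        (G (k : ℤ) ⧸ Submodule.comap (G (k : ℤ)).subtype (G ((k : ℤ) - 1))))
        ≃ₗ[ℤ_[p]] (G n ⧸ Submodule.comap (G n).subtype (G (n - 1))) :=
      directSumUniqueAux (R := ℤ_[p]) (fun k : ↥(Finset.Icc n n) =>
        (G (k : ℤ) ⧸ Submodule.comap (G (k : ℤ)).subtype (G ((k : ℤ) - 1))))
    exact ⟨((LinearEquiv.ofTop (G n) htop).symm.trans
      ((Submodule.quotEquivOfEqBot _ hC).symm)).trans Ezero.symm⟩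
  | succ d ih =>
    intro m n hn hp M _ _ T G hbot htop hchain hinv hwt
    classical
    have hd : m ≤ n - 1 := by omega
    set c : ℤ → ℤ_[p] := fun k => ((u ^ k : ℤ_[p]ˣ) : ℤ_[p]) with hc
    have hUnit : ∀ k ∈ Finset.Icc m (n - 1), IsUnit (c n - c k) := by
      intro k hk
      rw [Finset.mem_Icc] at hk
      exact isUnit_pow_sub_aux p u hu n k (by omega) (by omega)
    set e : ℤ → ℤ_[p] := fun k => Ring.inverse (c n - c k) with he
    have hecancel : ∀ k ∈ Finset.Icc m (n - 1), e k * (c n - c k) = 1 := fun k hk =>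
      Ring.inverse_mul_cancel _ (hUnit k hk)
    set q : ℤ_[p][X] := ∏ k ∈ Finset.Icc m (n - 1), (C (e k) * (X - C (c k))) with hq
    set P : M →ₗ[ℤ_[p]] M := aeval T q with hP
    -- Step 1: P kills G (n-1)
    have hkey : ∀ j : ℤ, m - 1 ≤ j → j ≤ n - 1 → ∀ x ∈ G j,
        aeval T (∏ k ∈ Finset.Icc m j, (X - C (c k))) x = 0 := by
      intro j hj1
      refine Int.le_induction (motive := fun j _ => j ≤ n - 1 → ∀ x ∈ G j,
        aeval T (∏ k ∈ Finset.Icc m j, (X - C (c k))) x = 0) ?_ ?_ j hj1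
      · intro _ x hx
        rw [Finset.Icc_eq_empty (by omega : ¬(m ≤ m - 1)), Finset.prod_empty, map_one, Module.End.one_apply]
        rw [hbot] at hx
        simpa using hx
      · intro j hj ihj hj2 x hx
        have hsplit : Finset.Icc m (j + 1) = insert (j + 1) (Finset.Icc m j) := by
          ext a; simp only [Finset.mem_Icc, Finset.mem_insert]; omega
        have hnotmem : (j + 1) ∉ Finset.Icc m j := by
          simp only [Finset.mem_Icc]; omega
        rw [hsplit, Finset.prod_insert hnotmem, mul_comm, map_mul, Module.End.mul_apply]
        have hstep : (aeval T (X - C (c (j + 1)))) x = T x - c (j + 1) • x := by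
          simp [Module.algebraMap_end_apply]
        rw [hstep]
        have hmem : T x - c (j + 1) • x ∈ G j := by
          have := hwt (j + 1) (by omega) (by omega) x hx
          simpa using this
        exact ihj (by omega) _ hmem
    have hq_eq : q = (∏ k ∈ Finset.Icc m (n - 1), C (e k))
        * ∏ k ∈ Finset.Icc m (n - 1), (X - C (c k)) := Finset.prod_mul_distrib
    have hPkill : ∀ x ∈ G (n - 1), P x = 0 := by
      intro x hx
      rw [hP, hq_eq, map_mul, Module.End.mul_apply,
        hkey (n - 1) (by omega) le_rfl x hx, map_zero]
    -- Step 2: P fixes everything mod G (n-1)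
    have hfactor : ∀ a ∈ Finset.Icc m (n - 1), ∀ y : M,
        aeval T (C (e a) * (X - C (c a))) y - y ∈ G (n - 1) := by
      intro a ha y
      have hw : T y - c n • y ∈ G (n - 1) := by
        have := hwt n (by omega) le_rfl y (htop ▸ Submodule.mem_top)
        simpa using this
      have hval : aeval T (C (e a) * (X - C (c a))) y = e a • (T y - c a • y) := by
        simp [Module.End.mul_apply, Module.algebraMap_end_apply, smul_sub]
      have hrw : e a • (T y - c a • y) - y = e a • (T y - c n • y) := by
        have h1 : e a * (c n - c a) = 1 := hecancel a ha
        have h2 : T y - c a • y = (T y - c n • y) + (c n - c a) • y := by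
          rw [sub_smul]; abel
        rw [h2, smul_add, smul_smul, h1, one_smul, add_sub_cancel_right]
      rw [hval, hrw]
      exact Submodule.smul_mem _ _ hw
    have hfix : ∀ s : Finset ℤ, s ⊆ Finset.Icc m (n - 1) → ∀ y : M,
        aeval T (∏ k ∈ s, (C (e k) * (X - C (c k)))) y - y ∈ G (n - 1) := by
      intro s
      induction s using Finset.induction_on with
      | empty => intro _ y; simp
      | @insert a s ha ihs =>
        intro hsub y
        have haIcc : a ∈ Finset.Icc m (n - 1) := hsub (Finset.mem_insert_self a s)
        have hsub' : s ⊆ Finset.Icc m (n - 1) := fun x hx =>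
          hsub (Finset.mem_insert_of_mem hx)
        rw [Finset.prod_insert ha, map_mul, Module.End.mul_apply]
        set z := aeval T (∏ k ∈ s, (C (e k) * (X - C (c k)))) y with hz
        have h1 : aeval T (C (e a) * (X - C (c a))) z - z ∈ G (n - 1) := hfactor a haIcc z
        have h2 : z - y ∈ G (n - 1) := ihs hsub' y
        have heq : aeval T (C (e a) * (X - C (c a))) z - y
            = (aeval T (C (e a) * (X - C (c a))) z - z) + (z - y) := by abel
        rw [heq]
        exact Submodule.add_mem _ h1 h2
    have hPfix : ∀ x : M, P x - x ∈ G (n - 1) := fun x =>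
      hfix _ (Finset.Subset.refl _) x
    -- Step 3: idempotency, kernel, complement
    have hPP : ∀ x : M, P (P x) = P x := by
      intro x
      have h0 : P (P x - x) = 0 := hPkill _ (hPfix x)
      rw [map_sub] at h0
      exact sub_eq_zero.mp h0
    have hker : LinearMap.ker P = G (n - 1) := by
      apply le_antisymm
      · intro x hx
        have hx0 : P x = 0 := LinearMap.mem_ker.mp hx
        have hmem := hPfix x
        rw [hx0, zero_sub] at hmem
        simpa using Submodule.neg_mem _ hmem
      · intro x hx
        exact LinearMap.mem_ker.mpr (hPkill x hx)
    have hcompl : IsCompl (LinearMap.ker P) (LinearMap.range P) := by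
      constructor
      · rw [disjoint_iff_inf_le]
        intro x hx
        obtain ⟨hk, hr⟩ := Submodule.mem_inf.mp hx
        obtain ⟨y, rfl⟩ := hr
        have h0 : P (P y) = 0 := LinearMap.mem_ker.mp hk
        rw [hPP] at h0
        simp [h0, Submodule.mem_bot]
      · rw [codisjoint_iff, Submodule.eq_top_iff']
        intro x
        refine Submodule.mem_sup.mpr ⟨x - P x, ?_, P x, ⟨x, rfl⟩, by abel⟩
        rw [LinearMap.mem_ker, map_sub, hPP, sub_self]
    -- Step 4: the inner filtered module
    set G' : ℤ → Submodule ℤ_[p] ↥(G (n - 1)) :=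
      fun k => Submodule.comap (G (n - 1)).subtype (G k) with hG'
    have hTinv : ∀ x ∈ G (n - 1), T x ∈ G (n - 1) := hinv (n - 1) (by omega) (by omega)
    set T' : ↥(G (n - 1)) →ₗ[ℤ_[p]] ↥(G (n - 1)) := T.restrict hTinv with hT'
    have hbot' : G' (m - 1) = ⊥ := by
      show Submodule.comap _ _ = ⊥
      rw [hbot, Submodule.comap_bot, Submodule.ker_subtype]
    have htop' : G' (n - 1) = ⊤ := Submodule.comap_subtype_self _
    have hchain' : ∀ k : ℤ, m ≤ k → k ≤ n - 1 → G' (k - 1) ≤ G' k := fun k h1 h2 =>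
      Submodule.comap_mono (hchain k h1 (by omega))
    have hinv' : ∀ k : ℤ, m ≤ k → k ≤ n - 1 → ∀ x ∈ G' k, T' x ∈ G' k := by
      intro k h1 h2 x hx
      show ((T' x : ↥(G (n - 1))) : M) ∈ G k
      rw [hT', LinearMap.restrict_apply]
      exact hinv k h1 (by omega) (x : M) hx
    have hwt' : ∀ k : ℤ, m ≤ k → k ≤ n - 1 → ∀ x ∈ G' k,
        T' x - ((u ^ k : ℤ_[p]ˣ) : ℤ_[p]) • x ∈ G' (k - 1) := by
      intro k h1 h2 x hx
      show ((T' x - ((u ^ k : ℤ_[p]ˣ) : ℤ_[p]) • x : ↥(G (n - 1))) : M) ∈ G (k - 1)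
      have hco : ((T' x - ((u ^ k : ℤ_[p]ˣ) : ℤ_[p]) • x : ↥(G (n - 1))) : M)
          = T (x : M) - ((u ^ k : ℤ_[p]ˣ) : ℤ_[p]) • (x : M) := by
        rw [Submodule.coe_sub, Submodule.coe_smul, hT', LinearMap.restrict_apply]
      rw [hco]
      exact hwt k h1 (by omega) (x : M) hx
    obtain ⟨E2⟩ := ih m (n - 1) (by omega) (by omega) ↥(G (n - 1)) T' G'
      hbot' htop' hchain' hinv' hwt'
    -- monotonicity of the chain
    have hmono : ∀ i : ℕ, ∀ k : ℤ, m - 1 ≤ k → k + i ≤ n → G k ≤ G (k + i) := by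
      intro i
      induction i with
      | zero => intro k _ _; simp
      | succ i ihi =>
        intro k hk1 hk2
        refine le_trans (ihi k hk1 (by omega)) ?_
        have hstep := hchain (k + i + 1) (by omega) (by omega)
        have heq : (k + i + 1 : ℤ) - 1 = k + i := by ring
        rw [heq] at hstep
        have heq2 : (k + ((i + 1 : ℕ) : ℤ)) = k + i + 1 := by push_cast; ring
        rw [heq2]
        exact hstep
    have hGle : ∀ k : ℤ, m ≤ k → k ≤ n - 1 → G k ≤ G (n - 1) := by
      intro k h1 h2
      have := hmono (n - 1 - k).toNat k (by omega) (by omega)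
      rwa [show k + ((n - 1 - k).toNat : ℤ) = n - 1 by omega] at this
    -- componentwise equivalences
    let comp : ∀ k : ↥(Finset.Icc m (n - 1)),
        (G' (k : ℤ) ⧸ Submodule.comap (G' (k : ℤ)).subtype (G' ((k : ℤ) - 1)))
          ≃ₗ[ℤ_[p]]
        (G (k : ℤ) ⧸ Submodule.comap (G (k : ℤ)).subtype (G ((k : ℤ) - 1))) := by
      intro k
      have hk := Finset.mem_Icc.mp k.2
      exact quotRestrictEquivAux (G (n - 1)) (G (k : ℤ)) (G ((k : ℤ) - 1))
        (hGle _ hk.1 hk.2)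
    have E4 := DFinsupp.mapRange.linearEquiv comp
    -- assembling
    have hset : Finset.Icc m n = insert n (Finset.Icc m (n - 1)) := by
      ext a; simp only [Finset.mem_Icc, Finset.mem_insert]; omega
    have hnmem : n ∉ Finset.Icc m (n - 1) := by
      simp only [Finset.mem_Icc]; omega
    rw [hset]
    have EK : ↥(LinearMap.ker P) ≃ₗ[ℤ_[p]] ↥(G (n - 1)) := LinearEquiv.ofEq _ _ hker
    have ER : ↥(LinearMap.range P) ≃ₗ[ℤ_[p]] (M ⧸ G (n - 1)) :=
      (LinearMap.quotKerEquivRange P).symm.trans (Submodule.quotEquivOfEq _ _ hker)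
    have Etop : (G n ⧸ Submodule.comap (G n).subtype (G (n - 1))) ≃ₗ[ℤ_[p]] M ⧸ G (n - 1) :=
      quotTopEquivAux (G n) (G (n - 1)) htop
    have E1 : M ≃ₗ[ℤ_[p]] ↥(LinearMap.ker P) × ↥(LinearMap.range P) :=
      (Submodule.prodEquivOfIsCompl _ _ hcompl).symm
    have Emain : M ≃ₗ[ℤ_[p]]
        ((G n ⧸ Submodule.comap (G n).subtype (G (n - 1)))
          × ⨁ k : ↥(Finset.Icc m (n - 1)),
            (G (k : ℤ) ⧸ Submodule.comap (G (k : ℤ)).subtype (G ((k : ℤ) - 1)))) :=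
      ((E1.trans (LinearEquiv.prodCongr (EK.trans (E2.trans E4)) (ER.trans Etop.symm))).trans
        (LinearEquiv.prodComm _ _ _))
    exact ⟨Emain.trans ((DirectSum.lequivCongrLeft
      (M := fun i : ↥(insert n (Finset.Icc m (n - 1))) =>
        (G (i : ℤ) ⧸ Submodule.comap (G (i : ℤ)).subtype (G ((i : ℤ) - 1))))
      ℤ_[p] (Finset.subtypeInsertEquivOption hnmem)).trans
      (DirectSum.lequivProdDirectSum ℤ_[p])).symm⟩

/-- the algebraic content of Proposition 6.2 of the paper: Let `p` be a prime and
`u` a unit of `ℤ_p` whose residue modulo `p` generates `(ℤ/pℤ)ˣ`.  Let `m ≤ n` be integers with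
`0 ≤ n - m < p - 1`.  Let `M` be a finitely generated `ℤ_p`-module with a `ℤ_p`-linear
endomorphism `T` and a chain of `T`-invariant submodules `0 = G_{m-1} ⊆ G_m ⊆ ⋯ ⊆ G_n = M`
such that `T` induces multiplication by `u ^ k` on each quotient `G_k / G_{k-1}`.  Then there
is a (non-canonical) `ℤ_p`-module isomorphism `M ≅ ⊕_{k=m}^{n} G_k / G_{k-1}`. -/
theorem filtered_module_splits (p : ℕ) [Fact p.Prime] (u : ℤ_[p]ˣ)
    (hu : ∀ g : (ZMod p)ˣ,
      g ∈ Subgroup.zpowers (Units.map (PadicInt.toZMod (p := p)).toMonoidHom u))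
    (m n : ℤ) (hmn : m ≤ n) (hp : n - m < (p : ℤ) - 1)
    (M : Type) [AddCommGroup M] [Module ℤ_[p] M] [Module.Finite ℤ_[p] M]
    (T : M →ₗ[ℤ_[p]] M)
    (G : ℤ → Submodule ℤ_[p] M)
    (hbot : G (m - 1) = ⊥) (htop : G n = ⊤)
    (hchain : ∀ k : ℤ, m ≤ k → k ≤ n → G (k - 1) ≤ G k)
    (hinv : ∀ k : ℤ, m ≤ k → k ≤ n → ∀ x ∈ G k, T x ∈ G k)
    (hwt : ∀ k : ℤ, m ≤ k → k ≤ n → ∀ x ∈ G k,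
      T x - ((u ^ k : ℤ_[p]ˣ) : ℤ_[p]) • x ∈ G (k - 1)) :
    Nonempty
      (M ≃ₗ[ℤ_[p]]
        ⨁ k : (Finset.Icc m n),
          (G (k : ℤ) ⧸ Submodule.comap (G (k : ℤ)).subtype (G ((k : ℤ) - 1)))) := by
  exact filtered_module_splits_aux p u hu (n - m).toNat m n (by omega) hp M T G
    hbot htop hchain hinv hwt
end

section
/- Let p be a prime number and let A be a finitely generated module over the ring ℤ_p of p-adic integers. Suppose a : ℕ → A is a sequence of elements such that p^n • a(n) = 0 for all n and a(n) = p • a(n+1) for all n. Then a(n) = 0 for all n. -/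
/-- from the proof of Proposition 1.4 of the paper: Let `p` be a prime and `A` a
finitely generated `ℤ_p`-module.  If `a : ℕ → A` satisfies `p^n • a n = 0` and
`a n = p • a (n+1)` for all `n`, then `a n = 0` for all `n`.  (Equivalently,
`lim_n Tor^{ℤ_p}(ℤ/p^n, A) = 0`.) -/
theorem lim_tor_vanishes (p : ℕ) [Fact p.Prime]
    (A : Type*) [AddCommGroup A] [Module ℤ_[p] A] [Module.Finite ℤ_[p] A]
    (a : ℕ → A)
    (htor : ∀ n : ℕ, ((p : ℤ_[p]) ^ n) • a n = 0)
    (hcomp : ∀ n : ℕ, a n = (p : ℤ_[p]) • a (n + 1)) :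
    ∀ n : ℕ, a n = 0 := by
  -- a n = p^m • a (n+m)
  have key : ∀ n m : ℕ, a n = ((p : ℤ_[p]) ^ m) • a (n + m) := by
    intro n m
    induction m with
    | zero => simp
    | succ m ih =>
      rw [ih, hcomp (n + m), smul_smul, ← pow_succ]
      rfl
  -- the chain of cyclic submodules spanned by a k is monotone
  have hmono : Monotone (fun k => Submodule.span ℤ_[p] {a k}) := by
    apply monotone_nat_of_le_succ
    intro k
    rw [Submodule.span_le, Set.singleton_subset_iff]
    rw [hcomp k]
    exact Submodule.smul_mem _ _ (Submodule.mem_span_singleton_self _)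
  have : IsNoetherian ℤ_[p] A := inferInstance
  obtain ⟨N, hN⟩ := monotone_stabilizes_iff_noetherian.mpr this
    ⟨fun k => Submodule.span ℤ_[p] {a k}, hmono⟩
  -- for k ≥ N, a (k+1) = 0
  have hzero : ∀ k : ℕ, N ≤ k → a (k + 1) = 0 := by
    intro k hk
    have h1 : a (k + 1) ∈ Submodule.span ℤ_[p] {a k} := by
      have e : Submodule.span ℤ_[p] {a k} = Submodule.span ℤ_[p] {a (k + 1)} := by
        have := (hN (k + 1) (hk.trans (Nat.le_succ k))).symm.trans (hN k hk)
        simpa using this.symm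
      rw [e]
      exact Submodule.mem_span_singleton_self _
    obtain ⟨c, hc⟩ := Submodule.mem_span_singleton.mp h1
    have h2 : (1 - c * (p : ℤ_[p])) • a (k + 1) = 0 := by
      have : a (k + 1) = (c * (p : ℤ_[p])) • a (k + 1) := by
        conv_lhs => rw [← hc, hcomp k, smul_smul]
      rw [sub_smul, one_smul, ← this, sub_self]
    have hu : IsUnit (1 - c * (p : ℤ_[p])) := by
      apply IsLocalRing.isUnit_one_sub_self_of_mem_nonunits
      intro hunit
      have hp : ¬ IsUnit ((p : ℤ_[p])) := by
        rw [PadicInt.isUnit_iff, PadicInt.norm_p]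
        have h1 : (1 : ℝ) < p := by exact_mod_cast (Fact.out : p.Prime).one_lt
        exact ne_of_lt (inv_lt_one_of_one_lt₀ h1)
      exact hp (isUnit_of_mul_isUnit_right hunit)
    obtain ⟨u, hu⟩ := hu
    have := congrArg (fun x => (↑u⁻¹ : ℤ_[p]) • x) h2
    simpa [hu.symm, smul_smul] using this
  intro n
  rcases le_or_gt n N with h | h
  · have := key n (N + 1 - n)
    rw [Nat.add_sub_cancel' (h.trans (Nat.le_succ N))] at this
    rw [this, hzero N le_rfl, smul_zero]
  · obtain ⟨k, rfl⟩ := Nat.exists_eq_add_of_lt h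
    exact hzero (N + k) (Nat.le_add_right N k)
end
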